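/- Let a, b ∈ ℝ and c, d > 0, and let x, y, ψ, u, v, r, τ₂ : I → ℝ be differentiable functions on an interval I satisfying ẋ = u cos ψ − v sin ψ, ẏ = u sin ψ + v cos ψ, ψ̇ = r, v̇ = −a τ₂ − b r − c u r − d v, and ṙ = τ₂ on I. Define x̄ = x cos ψ + y sin ψ, ȳ = −x sin ψ + y cos ψ, v̄ = v + a r + b ψ, z = d ȳ + v̄, and ū = c u + d x̄. Then on I: (i) x̄̇ = (ū − d x̄)/c + (z − v̄) r/d; (ii) v̄̇ = −(ū − d x̄) r − d(v̄ − a r − b ψ); (iii) ż = −ū r. -/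

import Mathlib

open Real

/-- The transformed coordinates x̄ = x cos ψ + y sin ψ, ȳ = −x sin ψ + y cos ψ,
v̄ = v + a r + b ψ, z = d ȳ + v̄, ū = c u + d x̄ satisfy
x̄̇ = (ū − d x̄)/c + (z − v̄) r/d, v̄̇ = −(ū − d x̄) r − d(v̄ − a r − b ψ), ż = −ū r. -/
theorem stmt7 (a b c d : ℝ) (hc : 0 < c) (hd : 0 < d)
    (I : Set ℝ) (x y ψ u v r τ₂ : ℝ → ℝ)
    (hx : ∀ t ∈ I, HasDerivAt x (u t * Real.cos (ψ t) - v t * Real.sin (ψ t)) t)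
    (hy : ∀ t ∈ I, HasDerivAt y (u t * Real.sin (ψ t) + v t * Real.cos (ψ t)) t)
    (hψ : ∀ t ∈ I, HasDerivAt ψ (r t) t)
    (hv : ∀ t ∈ I, HasDerivAt v (-a * τ₂ t - b * r t - c * u t * r t - d * v t) t)
    (hr : ∀ t ∈ I, HasDerivAt r (τ₂ t) t)
    (hτ₂ : ∀ t ∈ I, DifferentiableAt ℝ τ₂ t)
    (xb yb vb z ub : ℝ → ℝ)
    (hxb : ∀ t : ℝ, xb t = x t * Real.cos (ψ t) + y t * Real.sin (ψ t))
    (hyb : ∀ t : ℝ, yb t = -(x t) * Real.sin (ψ t) + y t * Real.cos (ψ t))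
    (hvb : ∀ t : ℝ, vb t = v t + a * r t + b * ψ t)
    (hz : ∀ t : ℝ, z t = d * yb t + vb t)
    (hub : ∀ t : ℝ, ub t = c * u t + d * xb t) :
    ∀ t ∈ I,
      HasDerivAt xb ((ub t - d * xb t) / c + (z t - vb t) * r t / d) t ∧
      HasDerivAt vb (-(ub t - d * xb t) * r t - d * (vb t - a * r t - b * ψ t)) t ∧
      HasDerivAt z (-(ub t * r t)) t := by
  intro t ht
  have hxt := hx t ht
  have hyt := hy t ht
  have hψt := hψ t ht
  have hvt := hv t ht
  have hrt := hr t ht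
  have hcos : HasDerivAt (fun s => Real.cos (ψ s)) (-Real.sin (ψ t) * r t) t := hψt.cos
  have hsin : HasDerivAt (fun s => Real.sin (ψ s)) (Real.cos (ψ t) * r t) t := hψt.sin
  -- derivative of xb
  have hxb' : HasDerivAt xb (u t + (-(x t) * Real.sin (ψ t) + y t * Real.cos (ψ t)) * r t) t := by
    have h : HasDerivAt (fun s => x s * Real.cos (ψ s) + y s * Real.sin (ψ s))
        ((u t * Real.cos (ψ t) - v t * Real.sin (ψ t)) * Real.cos (ψ t)
          + x t * (-Real.sin (ψ t) * r t)
          + ((u t * Real.sin (ψ t) + v t * Real.cos (ψ t)) * Real.sin (ψ t)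
          + y t * (Real.cos (ψ t) * r t))) t :=
      (hxt.mul hcos).add (hyt.mul hsin)
    have heq : xb = fun s => x s * Real.cos (ψ s) + y s * Real.sin (ψ s) := funext hxb
    rw [heq]
    convert h using 1
    linear_combination (-(u t)) * Real.sin_sq_add_cos_sq (ψ t)
  -- derivative of vb
  have hvb' : HasDerivAt vb (-(c * u t * r t) - d * v t) t := by
    have h := (hvt.add (hrt.const_mul a)).add (hψt.const_mul b)
    have heq : vb = fun s => v s + a * r s + b * ψ s := funext hvb
    rw [heq]
    refine h.congr_deriv ?_
    ring
  -- derivative of yb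
  have hyb' : HasDerivAt yb (v t - (x t * Real.cos (ψ t) + y t * Real.sin (ψ t)) * r t) t := by
    have h : HasDerivAt (fun s => -(x s) * Real.sin (ψ s) + y s * Real.cos (ψ s))
        ((-(u t * Real.cos (ψ t) - v t * Real.sin (ψ t))) * Real.sin (ψ t)
          + (-(x t)) * (Real.cos (ψ t) * r t)
          + ((u t * Real.sin (ψ t) + v t * Real.cos (ψ t)) * Real.cos (ψ t)
          + y t * (-Real.sin (ψ t) * r t))) t :=
      ((hxt.neg.mul hsin)).add (hyt.mul hcos)
    have heq : yb = fun s => -(x s) * Real.sin (ψ s) + y s * Real.cos (ψ s) := funext hyb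
    rw [heq]
    convert h using 1
    linear_combination (-(v t)) * Real.sin_sq_add_cos_sq (ψ t)
  refine ⟨?_, ?_, ?_⟩
  · convert hxb' using 1
    rw [hub t, hz t, hyb t]
    field_simp
    ring
  · convert hvb' using 1
    rw [hub t, hvb t]
    ring
  · have h := (hyb'.const_mul d).add hvb'
    have heq : z = fun s => d * yb s + vb s := funext hz
    rw [heq]
    refine h.congr_deriv ?_
    rw [hub t, hxb t]
    ring
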